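/- Let G be a subgroup of W = V ⋊ S_4 such that the projection p : G → S_4 is surjective and the kernel of p restricted to G is exactly {(0, id), σ}, i.e. G ∩ V = {0, ε}. If some element w ∈ V has G-orbit of cardinality 2 under the affine action of G on V, then there exists a subgroup H ≤ G for which p restricts to an isomorphism from H onto S_4 (i.e. the extension 1 → ℤ/2ℤ → G → S_4 → 1 splits). Consequently, if the extension does not split, then no G-orbit on V has cardinality 2. -/
import Mathlib


/-- `V = (ℤ/2ℤ)⁴`. -/
abbrev V4 : Type := Fin 4 → ZMod 2

/-- The action of `S₄` on `V = (ℤ/2ℤ)⁴` permuting the coordinates,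
as an additive automorphism. -/
def permAddEquiv (π : Equiv.Perm (Fin 4)) : V4 ≃+ V4 where
  toFun w := fun i => w (π⁻¹ i)
  invFun w := fun i => w (π i)
  left_inv w := by funext i; simp
  right_inv w := by funext i; simp
  map_add' w₁ w₂ := rfl

/-- The corresponding homomorphism `S₄ →* Aut(V)` (with `V` written
multiplicatively so as to form the semidirect product). -/
def permHom : Equiv.Perm (Fin 4) →* MulAut (Multiplicative V4) where
  toFun π := AddEquiv.toMultiplicative (permAddEquiv π)
  map_one' := by ext w; rfl
  map_mul' π₁ π₂ := by ext w; rfl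

/-- `W = V ⋊ S₄`. -/
abbrev W4 : Type := SemidirectProduct (Multiplicative V4) (Equiv.Perm (Fin 4)) permHom

/-- `ε = (1,1,1,1) ∈ V`. -/
def epsV : V4 := fun _ => 1

/-- `σ = (ε, id) ∈ W`, the translation by `ε`. -/
def sigmaW : W4 := SemidirectProduct.inl (Multiplicative.ofAdd epsV)

/-- The affine action of `W = V ⋊ S₄` on `V`: `(v, π) · w = π(w) + v`. -/
def aff (g : W4) (w : V4) : V4 :=
  fun i => w (g.right⁻¹ i) + Multiplicative.toAdd g.left i

lemma aff_one (u : V4) : aff 1 u = u := by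
  funext i; simp [aff]

lemma aff_mul (g h : W4) (u : V4) : aff (g * h) u = aff g (aff h u) := by
  funext i
  simp [aff, permHom, permAddEquiv, mul_inv_rev]
  ring

lemma aff_sigma (u : V4) : aff sigmaW u = fun i => u i + 1 := by
  funext i
  simp [aff, sigmaW, epsV]

lemma sigma_ne_fix (u : V4) : aff sigmaW u ≠ u := by
  rw [aff_sigma]
  intro h
  have := congrFun h 0
  simp at this

/-- Stabilizer of `w` in `G` under the affine action. -/
def stabSub (G : Subgroup W4) (w : V4) : Subgroup W4 where
  carrier := {g : W4 | g ∈ G ∧ aff g w = w}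
  one_mem' := ⟨G.one_mem, aff_one w⟩
  mul_mem' := fun hx hy => ⟨G.mul_mem hx.1 hy.1, by rw [aff_mul, hy.2, hx.2]⟩
  inv_mem' := fun {x} hx => ⟨G.inv_mem hx.1, by
    conv_lhs => rw [← hx.2]
    rw [← aff_mul, inv_mul_cancel, aff_one]⟩

lemma mem_stabSub {G : Subgroup W4} {w : V4} {g : W4} :
    g ∈ stabSub G w ↔ g ∈ G ∧ aff g w = w := Iff.rfl

/-- **An orbit of size 2 forces the extension to split.**
Let `G ≤ W = V ⋊ S₄` be a subgroup such that the projection `p : G → S₄` is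
surjective and the kernel of `p` restricted to `G` is exactly `{1, σ}` (i.e.
`G ∩ V = {0, ε}`).  If some `w ∈ V` has `G`-orbit of cardinality 2 under the
affine action of `G` on `V`, then some subgroup `H ≤ G` maps isomorphically
onto `S₄` under `p`, i.e. the extension `1 → ℤ/2 → G → S₄ → 1` splits.
(Consequently, if the extension does not split, no `G`-orbit on `V` has
cardinality 2.) -/
theorem splits_of_orbit_of_size_two
    (G : Subgroup W4)
    (hsurj : ∀ π : Equiv.Perm (Fin 4), ∃ g ∈ G, g.right = π)
    (hσ : sigmaW ∈ G)
    (hker : ∀ g ∈ G, g.right = 1 → g = 1 ∨ g = sigmaW)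
    (w : V4)
    (horb : Set.ncard {u : V4 | ∃ g ∈ G, aff g w = u} = 2) :
    ∃ H : Subgroup W4, H ≤ G ∧
      Function.Bijective (fun h : H => (h : W4).right) := by
  obtain ⟨a, b, hab, hS⟩ := Set.ncard_eq_two.mp horb
  have hw : w ∈ {u : V4 | ∃ g ∈ G, aff g w = u} := ⟨1, G.one_mem, aff_one w⟩
  have hwε : (fun i => w i + 1) ∈ {u : V4 | ∃ g ∈ G, aff g w = u} :=
    ⟨sigmaW, hσ, aff_sigma w⟩
  have hne : w ≠ fun i => w i + 1 := by
    intro h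
    exact sigma_ne_fix w (by rw [aff_sigma]; exact h.symm)
  have key : ∀ g ∈ G, aff g w = w ∨ aff g w = fun i => w i + 1 := by
    intro g hg
    have hu : aff g w ∈ ({a, b} : Set V4) := hS ▸ ⟨g, hg, rfl⟩
    have hw' : w ∈ ({a, b} : Set V4) := hS ▸ hw
    have hε' : (fun i => w i + 1) ∈ ({a, b} : Set V4) := hS ▸ hwε
    simp only [Set.mem_insert_iff, Set.mem_singleton_iff] at hu hw' hε'
    rcases hw' with h1 | h1 <;> rcases hε' with h2 | h2 <;>
      rcases hu with h3 | h3 <;>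
      first
      | exact Or.inl (h3.trans h1.symm)
      | exact Or.inr (h3.trans h2.symm)
      | exact absurd (h1.trans h2.symm) hne
  refine ⟨stabSub G w, fun g hg => hg.1, ?_, ?_⟩
  · -- injective
    rintro ⟨x, hxG, hxw⟩ ⟨y, hyG, hyw⟩ heq
    simp only at heq
    have hG : x * y⁻¹ ∈ G := G.mul_mem hxG (G.inv_mem hyG)
    have hr : (x * y⁻¹).right = 1 := by
      rw [SemidirectProduct.mul_right, SemidirectProduct.inv_right, heq, mul_inv_cancel]
    have hfix : aff (x * y⁻¹) w = w := by
      rw [aff_mul]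
      have : aff y⁻¹ w = w := by
        conv_lhs => rw [← hyw]
        rw [← aff_mul, inv_mul_cancel, aff_one]
      rw [this, hxw]
    rcases hker _ hG hr with h | h
    · have : x = y := by
        have := mul_inv_eq_one.mp h
        exact this
      exact Subtype.ext this
    · exact absurd hfix (h ▸ sigma_ne_fix w)
  · -- surjective
    intro π
    obtain ⟨g, hg, hright⟩ := hsurj π
    rcases key g hg with h | h
    · exact ⟨⟨g, hg, h⟩, hright⟩
    · refine ⟨⟨sigmaW * g, G.mul_mem hσ hg, ?_⟩, ?_⟩
      · rw [aff_mul, h, aff_sigma]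
        funext i
        show w i + 1 + 1 = w i
        rw [add_assoc]
        norm_num
        rfl
      · show (sigmaW * g).right = π
        simp [sigmaW, hright]
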